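/- Suppose assumptions (a)–(d) hold with ε, and additionally the map τ ↦ ⟨c,x̃_τ⟩ + E_ξ Q((‖x̃_τ‖₂,0,…,0)ᵀ, ξ) is L-Lipschitz in τ on [0,R]. Then the discretized decoupling estimate ẑ_Δ := max_{0 ≤ k ≤ ⌈R/Δ⌉} (⟨c,x̃_{kΔ}⟩ + E_ξ Q((‖x̃_{kΔ}‖₂,0,…,0)ᵀ, ξ)) satisfies |z* − ẑ_Δ| ≤ 2ε + LΔ. -/

import Mathlib

open scoped RealInnerProductSpace

/-- Under assumptions (a)–(d) with parameter `ε ≥ 0`, if additionally the decoupled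
objective `g(τ) = ⟪c,x̃_τ⟫ + E_ξ Q((‖x̃_τ‖,0,…,0)ᵀ, ξ)` is `L`-Lipschitz on `[0,R]`, then
the discretized estimate `ẑ_Δ = max_{0 ≤ k ≤ ⌈R/Δ⌉} g(kΔ)` satisfies
`|z* − ẑ_Δ| ≤ 2ε + LΔ`. -/
theorem discretized_decoupling_bound
    {m₁ n₁ m₂ n₂ : ℕ} [NeZero n₁] {ι : Type*} [Fintype ι]
    (A : Matrix (Fin m₁) (Fin n₁) ℝ) (b : Fin m₁ → ℝ) (c : EuclideanSpace ℝ (Fin n₁))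
    (P : ι → ℝ) (hP0 : ∀ ξ, 0 ≤ P ξ) (hP1 : ∑ ξ, P ξ = 1)
    (q : ι → EuclideanSpace ℝ (Fin n₂)) (W : ι → Matrix (Fin m₂) (Fin n₂) ℝ)
    (h : ι → Fin m₂ → ℝ) (T : ι → Matrix (Fin m₂) (Fin n₁) ℝ)
    (ε : ℝ) (hε : 0 ≤ ε)
    (R : ℝ)
    (hR : IsGreatest {r : ℝ | ∃ x : EuclideanSpace ℝ (Fin n₁),
      A.mulVec x ≤ b ∧ (∀ i, 0 ≤ x i) ∧ r = ‖x‖} R)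
    -- (a) unique optimal solutions x̃_τ of the τ-constrained first-stage problem
    (xτ : ℝ → EuclideanSpace ℝ (Fin n₁))
    (hxτ_feas : ∀ τ, 0 ≤ τ →
      A.mulVec (xτ τ) ≤ b ∧ (∀ i, 0 ≤ xτ τ i) ∧ ‖xτ τ‖ ≤ τ)
    (hxτ_opt : ∀ τ, 0 ≤ τ → ∀ x : EuclideanSpace ℝ (Fin n₁),
      A.mulVec x ≤ b → (∀ i, 0 ≤ x i) → ‖x‖ ≤ τ → ⟪c, x⟫ ≤ ⟪c, xτ τ⟫)
    (hxτ_uniq : ∀ τ, 0 ≤ τ → ∀ x : EuclideanSpace ℝ (Fin n₁),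
      A.mulVec x ≤ b → (∀ i, 0 ≤ x i) → ‖x‖ ≤ τ → ⟪c, x⟫ = ⟪c, xτ τ⟫ → x = xτ τ)
    -- (b) feasible bounded recourse with attained optimal values Q
    (Q : EuclideanSpace ℝ (Fin n₁) → ι → ℝ)
    (hQ : ∀ x : EuclideanSpace ℝ (Fin n₁), ‖x‖ ≤ R → ∀ ξ,
      IsGreatest {r : ℝ | ∃ y : EuclideanSpace ℝ (Fin n₂),
        (∀ j, 0 ≤ y j) ∧ (W ξ).mulVec y ≤ h ξ - (T ξ).mulVec x ∧ r = ⟪q ξ, y⟫} (Q x ξ))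
    -- (c) approximate rotational invariance
    (hrot : ∀ x : EuclideanSpace ℝ (Fin n₁), ‖x‖ ≤ R →
      |(∑ ξ, P ξ * Q x ξ) -
        (∑ ξ, P ξ * Q (EuclideanSpace.single (0 : Fin n₁) ‖x‖) ξ)| ≤ ε)
    -- (d) approximate monotonicity past ‖x̃‖ (with x̃ = x̃_R)
    (hmono : ∀ τ₁ τ₂ : ℝ, ‖xτ R‖ ≤ τ₁ → τ₁ ≤ τ₂ → τ₂ ≤ R →
      (∑ ξ, P ξ * Q (EuclideanSpace.single (0 : Fin n₁) τ₂) ξ) - ε ≤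
        ∑ ξ, P ξ * Q (EuclideanSpace.single (0 : Fin n₁) τ₁) ξ)
    -- the decoupled objective g and its Lipschitz property on [0, R]
    (g : ℝ → ℝ)
    (hg : ∀ τ, g τ = ⟪c, xτ τ⟫ +
      ∑ ξ, P ξ * Q (EuclideanSpace.single (0 : Fin n₁) ‖xτ τ‖) ξ)
    (L : ℝ) (hL : 0 ≤ L)
    (hLip : ∀ τ₁ ∈ Set.Icc (0 : ℝ) R, ∀ τ₂ ∈ Set.Icc (0 : ℝ) R,
      |g τ₁ - g τ₂| ≤ L * |τ₁ - τ₂|)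
    -- z* : optimal value of the two-stage program
    (zstar : ℝ)
    (hzstar : IsGreatest {v : ℝ | ∃ x : EuclideanSpace ℝ (Fin n₁),
      A.mulVec x ≤ b ∧ (∀ i, 0 ≤ x i) ∧ v = ⟪c, x⟫ + ∑ ξ, P ξ * Q x ξ} zstar)
    -- ẑ_Δ : discretized decoupled estimate
    (Δ : ℝ) (hΔ : 0 < Δ) (zΔ : ℝ)
    (hzΔ : IsGreatest {v : ℝ | ∃ k : ℕ, k ≤ Nat.ceil (R / Δ) ∧ v = g ((k : ℝ) * Δ)} zΔ) :
    |zstar - zΔ| ≤ 2 * ε + L * Δ := by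
  -- basic facts
  obtain ⟨⟨x0, hx0A, hx0pos, hx0R⟩, hRub⟩ := hR
  have hR0 : (0 : ℝ) ≤ R := hx0R ▸ norm_nonneg x0
  have hfeasR : ∀ x : EuclideanSpace ℝ (Fin n₁),
      A.mulVec x ≤ b → (∀ i, 0 ≤ x i) → ‖x‖ ≤ R := fun x hA hpos =>
    hRub ⟨x, hA, hpos, rfl⟩
  -- for τ ≥ R the constrained optimizer is the one at R
  have hconst : ∀ τ, R ≤ τ → xτ τ = xτ R := by
    intro τ hτ
    have hτ0 : 0 ≤ τ := le_trans hR0 hτ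
    obtain ⟨hfA, hfpos, hfnorm⟩ := hxτ_feas τ hτ0
    obtain ⟨hgA, hgpos, hgnorm⟩ := hxτ_feas R hR0
    have h1 : ⟪c, xτ τ⟫ ≤ ⟪c, xτ R⟫ :=
      hxτ_opt R hR0 _ hfA hfpos (hfeasR _ hfA hfpos)
    have h2 : ⟪c, xτ R⟫ ≤ ⟪c, xτ τ⟫ :=
      hxτ_opt τ hτ0 _ hgA hgpos (le_trans hgnorm hτ)
    exact hxτ_uniq R hR0 _ hfA hfpos (hfeasR _ hfA hfpos) (le_antisymm h1 h2)
  -- dichotomy: if the norm constraint is slack, the optimizer equals xτ R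
  have hdich : ∀ τ, 0 ≤ τ → ‖xτ τ‖ < τ → xτ τ = xτ R := by
    intro τ hτ0 hslack
    obtain ⟨huA, hupos, hunorm⟩ := hxτ_feas τ hτ0
    obtain ⟨hvA, hvpos, hvnorm⟩ := hxτ_feas R hR0
    set u := xτ τ with hu
    set v := xτ R with hv
    have h1 : ⟪c, u⟫ ≤ ⟪c, v⟫ :=
      hxτ_opt R hR0 _ huA hupos (hfeasR _ huA hupos)
    rcases le_or_gt ⟪c, v⟫ ⟪c, u⟫ with hle | hlt
    · exact hxτ_uniq R hR0 _ huA hupos (hfeasR _ huA hupos) (le_antisymm h1 hle)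
    · exfalso
      set D : ℝ := ‖u‖ + ‖v‖ + 1 + τ with hD
      have hD0 : 0 < D := by positivity
      set lam : ℝ := (τ - ‖u‖) / D with hlam
      have hlam0 : 0 < lam := div_pos (by linarith) hD0
      have hlam1 : lam ≤ 1 := by
        rw [hlam, div_le_one hD0]
        have := norm_nonneg u
        have := norm_nonneg v
        linarith
      set w : EuclideanSpace ℝ (Fin n₁) := (1 - lam) • u + lam • v with hw
      have hwA : A.mulVec w ≤ b := by
        intro i
        have : A.mulVec w = (1 - lam) • A.mulVec u + lam • A.mulVec v := by
          rw [hw, WithLp.ofLp_add, WithLp.ofLp_smul, WithLp.ofLp_smul, Matrix.mulVec_add, Matrix.mulVec_smul, Matrix.mulVec_smul]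
        rw [this]
        have h1 := huA i
        have h2 := hvA i
        simp only [Pi.add_apply, Pi.smul_apply, smul_eq_mul]
        nlinarith
      have hwpos : ∀ i, 0 ≤ w i := by
        intro i
        have h1 := hupos i
        have h2 := hvpos i
        simp only [hw, PiLp.add_apply, PiLp.smul_apply, smul_eq_mul]
        nlinarith
      have hwnorm : ‖w‖ ≤ τ := by
        have hn : ‖w‖ ≤ (1 - lam) * ‖u‖ + lam * ‖v‖ := by
          calc ‖w‖ ≤ ‖(1 - lam) • u‖ + ‖lam • v‖ := norm_add_le _ _
          _ = |1 - lam| * ‖u‖ + |lam| * ‖v‖ := by rw [norm_smul, norm_smul]; rfl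
          _ = (1 - lam) * ‖u‖ + lam * ‖v‖ := by
              rw [abs_of_nonneg (by linarith), abs_of_nonneg hlam0.le]
        have hlamD : lam * D = τ - ‖u‖ := by
          rw [hlam]; field_simp
        have := norm_nonneg u
        have := norm_nonneg v
        nlinarith
      have hopt := hxτ_opt τ hτ0 w hwA hwpos hwnorm
      have hcw : ⟪c, w⟫ = (1 - lam) * ⟪c, u⟫ + lam * ⟪c, v⟫ := by
        rw [hw, inner_add_right, real_inner_smul_right, real_inner_smul_right]
      rw [hcw] at hopt
      nlinarith
  -- Fact 1: for 0 ≤ τ, g τ ≤ zstar + ε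
  have hfact1 : ∀ τ, 0 ≤ τ → g τ ≤ zstar + ε := by
    intro τ hτ0
    obtain ⟨huA, hupos, _⟩ := hxτ_feas τ hτ0
    have hnm : ‖xτ τ‖ ≤ R := hfeasR _ huA hupos
    have hr := hrot (xτ τ) hnm
    have hz : ⟪c, xτ τ⟫ + ∑ ξ, P ξ * Q (xτ τ) ξ ≤ zstar :=
      hzstar.2 ⟨xτ τ, huA, hupos, rfl⟩
    rw [hg]
    rw [abs_le] at hr
    linarith [hr.1, hr.2]
  -- Fact 2: zstar ≤ g ‖x*‖ + 2ε, where x* attains zstar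
  obtain ⟨⟨xs, hxsA, hxspos, hxsval⟩, hzub⟩ := hzstar
  set τs : ℝ := ‖xs‖ with hτs
  have hτs0 : 0 ≤ τs := norm_nonneg xs
  have hτsR : τs ≤ R := hfeasR _ hxsA hxspos
  obtain ⟨htA, htpos, htnorm⟩ := hxτ_feas τs hτs0
  have hfact2 : zstar ≤ g τs + 2 * ε := by
    have hr := hrot xs (hτs ▸ hτsR)
    rw [← hτs] at hr
    rw [abs_le] at hr
    have hc1 : ⟪c, xs⟫ ≤ ⟪c, xτ τs⟫ := hxτ_opt τs hτs0 xs hxsA hxspos le_rfl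
    -- compare E Q(single τs) with E Q(single ‖xτ τs‖)
    have hEQ : (∑ ξ, P ξ * Q (EuclideanSpace.single (0 : Fin n₁) τs) ξ) - ε ≤
        ∑ ξ, P ξ * Q (EuclideanSpace.single (0 : Fin n₁) ‖xτ τs‖) ξ := by
      rcases eq_or_lt_of_le htnorm with heq | hlt
      · rw [heq]; linarith
      · have hxx : xτ τs = xτ R := hdich τs hτs0 hlt
        have hmm := hmono ‖xτ τs‖ τs (by rw [hxx]) htnorm hτsR
        exact hmm
    rw [hg]
    rw [hxsval]
    linarith [hr.1, hr.2]
  -- upper bound: zΔ ≤ zstar + ε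
  obtain ⟨⟨k0, hk0le, hk0val⟩, hzΔub⟩ := hzΔ
  have hgrid_le : ∀ k : ℕ, g ((k : ℝ) * Δ) ≤ zstar + ε := by
    intro k
    have hk0 : (0 : ℝ) ≤ (k : ℝ) * Δ := by positivity
    exact hfact1 _ hk0
  have hupper : zΔ ≤ zstar + ε := hk0val ▸ hgrid_le k0
  -- lower bound: zstar ≤ zΔ + 2ε + LΔ
  have hlower : zstar ≤ zΔ + 2 * ε + L * Δ := by
    set k : ℕ := Nat.ceil (τs / Δ) with hk
    have hkle : k ≤ Nat.ceil (R / Δ) := by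
      rw [hk]; gcongr
    have hτs_le : τs ≤ (k : ℝ) * Δ := by
      have := Nat.le_ceil (τs / Δ)
      calc τs = τs / Δ * Δ := by field_simp
      _ ≤ (k : ℝ) * Δ := by
          exact mul_le_mul_of_nonneg_right this hΔ.le
    have hkΔ_lt : (k : ℝ) * Δ < τs + Δ := by
      have hceil : (k : ℝ) < τs / Δ + 1 := by
        exact_mod_cast Nat.ceil_lt_add_one (by positivity : (0:ℝ) ≤ τs / Δ)
      have : (k : ℝ) * Δ < (τs / Δ + 1) * Δ := by
        exact mul_lt_mul_of_pos_right hceil hΔ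
      calc (k : ℝ) * Δ < (τs / Δ + 1) * Δ := this
      _ = τs + Δ := by field_simp
    set t' : ℝ := min ((k : ℝ) * Δ) R with ht'
    have ht'0 : 0 ≤ t' := le_min (le_trans hτs0 hτs_le) hR0
    have ht'R : t' ≤ R := min_le_right _ _
    have hτt' : τs ≤ t' := le_min hτs_le hτsR
    have ht'τΔ : t' - τs ≤ Δ := by
      have : t' ≤ (k : ℝ) * Δ := min_le_left _ _
      linarith
    have hgt' : g ((k : ℝ) * Δ) = g t' := by
      rcases le_or_gt ((k : ℝ) * Δ) R with hle | hlt
      · rw [ht', min_eq_left hle]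
      · rw [ht', min_eq_right hlt.le]
        rw [hg, hg, hconst _ hlt.le]
    have hlip := hLip t' ⟨ht'0, ht'R⟩ τs ⟨hτs0, hτsR⟩
    rw [abs_le] at hlip
    have habs : |t' - τs| ≤ Δ := by
      rw [abs_of_nonneg (by linarith)]; exact ht'τΔ
    have hLabs : L * |t' - τs| ≤ L * Δ := mul_le_mul_of_nonneg_left habs hL
    have hgin : g ((k : ℝ) * Δ) ≤ zΔ := hzΔub ⟨k, hkle, rfl⟩
    have : g τs ≤ g t' + L * Δ := by linarith [hlip.2]
    linarith [hfact2]
  have hLΔ : 0 ≤ L * Δ := mul_nonneg hL hΔ.le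
  rw [abs_sub_le_iff]
  constructor <;> linarith
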